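/- (Theorem 1, robust strict saddle property for r = 1.) Let M be an N×N real symmetric matrix with eigenvalues λ₁ > λ₂ ≥ λ₃ ≥ ⋯ ≥ λ_N. Set ε = 0.2(λ₁ − λ₂) and η = 0.3(λ₁ − λ₂). Then for every unit vector x ∈ ℝ^N with ‖grad g(x)‖₂ = ‖(x xᵀ − I_N) M x‖₂ ≤ ε, one has |λ_min(hess g(x))| ≥ η; that is, either (xᵀ M x)‖u‖₂² − uᵀ M u ≥ η ‖u‖₂² for all u with xᵀ u = 0, or there exists a unit vector u with xᵀ u = 0 such that (xᵀ M x) − uᵀ M u ≤ −η. -/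

import Mathlib

open Matrix

private lemma stmt3_caseB (R S Δ L : ℝ) (hΔ : 0 < Δ) (hS0 : 0 ≤ S) (hS35 : S ≤ 0.35)
    (hlow : (1 - S) * Δ ≤ L - R) :
    R - (1 - S)⁻¹ * (L * (1 - 2*S) + S*R) ≤ -(0.3*Δ) := by
  have h1S : (0:ℝ) < 1 - S := by linarith
  have hQ : (1-S) * ((1-S)⁻¹ * (L*(1-2*S)+S*R)) = L*(1-2*S)+S*R := by field_simp
  nlinarith [hQ, h1S, mul_le_mul_of_nonneg_right hlow (by linarith : (0:ℝ) ≤ 1 - 2*S),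
    mul_nonneg (mul_nonneg hΔ.le (by linarith : (0:ℝ) ≤ 1 - S))
      (by linarith : (0:ℝ) ≤ 0.7 - 2*S)]

private lemma stmt3_caseA (p n q c l0 l1 d t : ℝ) (hd : d = l0 - l1) (hdpos : 0 < d)
    (hn : 0 ≤ n) (hq : q ≤ l1 * n + d * c) (hc : c ≤ (1 - t) * n)
    (hp : l0 - p ≤ (t - 0.3) * d) : p * n - q ≥ 0.3 * d * n := by
  subst hd
  nlinarith [mul_le_mul_of_nonneg_right hp hn, mul_le_mul_of_nonneg_left hc hdpos.le]

private lemma stmt3_cs (A C S n : ℝ) (hCS : (-(A*C))^2 ≤ (1 - S)*(n - C^2))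
    (hS : S = A^2) : C^2 ≤ (1-S)*n := by nlinarith [hCS, hS]

private lemma stmt3_scalar (s t : ℝ) (h1 : s * t^2 ≤ 0.04) (h2 : 1 - s ≤ t) (h3 : 0.35 ≤ s)
    (h5 : 0 ≤ t) : t ≤ s - 0.3 := by
  have hs : (0:ℝ) ≤ s := by linarith
  nlinarith [sq_nonneg (t - 0.2), sq_nonneg (s - 0.8), sq_nonneg (s*t), mul_nonneg h5 hs,
    sq_nonneg t, sq_nonneg (s - 1), mul_nonneg (mul_nonneg h5 h5) hs, mul_nonneg h5 h5,
    sq_nonneg (s + t - 1), mul_nonneg (mul_nonneg hs hs) h5]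

theorem stmt_3 {N : ℕ} (hN : 1 < N) (M : Matrix (Fin N) (Fin N) ℝ) (hM : M.IsSymm)
    (lam : Fin N → ℝ) (v : Fin N → Fin N → ℝ)
    (horth : ∀ i j : Fin N, v i ⬝ᵥ v j = if i = j then 1 else 0)
    (heig : ∀ i : Fin N, M *ᵥ v i = lam i • v i)
    (hmono : ∀ i j : Fin N, i ≤ j → lam j ≤ lam i)
    (hgap : lam ⟨1, hN⟩ < lam ⟨0, by omega⟩) :
    ∀ x : Fin N → ℝ, Real.sqrt (∑ i, x i ^ 2) = 1 →
      Real.sqrt (∑ i, (((vecMulVec x x - 1) *ᵥ (M *ᵥ x)) i) ^ 2) ≤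
        0.2 * (lam ⟨0, by omega⟩ - lam ⟨1, hN⟩) →
      ((∀ u : Fin N → ℝ, x ⬝ᵥ u = 0 →
          (x ⬝ᵥ (M *ᵥ x)) * (∑ i, u i ^ 2) - u ⬝ᵥ (M *ᵥ u) ≥
            0.3 * (lam ⟨0, by omega⟩ - lam ⟨1, hN⟩) * ∑ i, u i ^ 2) ∨
        (∃ u : Fin N → ℝ, Real.sqrt (∑ i, u i ^ 2) = 1 ∧ x ⬝ᵥ u = 0 ∧
          (x ⬝ᵥ (M *ᵥ x)) - u ⬝ᵥ (M *ᵥ u) ≤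
            -(0.3 * (lam ⟨0, by omega⟩ - lam ⟨1, hN⟩)))) := by
  intro x hx1 hgrad
  classical
  have h0N : 0 < N := by omega
  set i0 : Fin N := ⟨0, h0N⟩ with hi0def
  set i1 : Fin N := ⟨1, hN⟩ with hi1def
  set δ : ℝ := lam i0 - lam i1 with hδdef
  have hδpos : 0 < δ := sub_pos.mpr hgap
  -- the matrix of eigenvectors
  set V : Matrix (Fin N) (Fin N) ℝ := Matrix.of v with hVdef
  have hVVt : V * Vᵀ = 1 := by
    ext i j
    simpa [Matrix.mul_apply, Matrix.one_apply, dotProduct, hVdef] using horth i j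
  have hVtV : Vᵀ * V = 1 := mul_eq_one_comm.mp hVVt
  have hpar : ∀ y z : Fin N → ℝ, (V *ᵥ y) ⬝ᵥ (V *ᵥ z) = y ⬝ᵥ z := by
    intro y z
    rw [Matrix.dotProduct_mulVec, ← Matrix.mulVec_transpose, Matrix.mulVec_mulVec, hVtV,
      Matrix.one_mulVec]
  have hpar' : ∀ y z : Fin N → ℝ, (Vᵀ *ᵥ y) ⬝ᵥ (Vᵀ *ᵥ z) = y ⬝ᵥ z := by
    intro y z
    rw [Matrix.dotProduct_mulVec, ← Matrix.mulVec_transpose, Matrix.transpose_transpose,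
      Matrix.mulVec_mulVec, hVVt, Matrix.one_mulVec]
  set D : Matrix (Fin N) (Fin N) ℝ := Matrix.diagonal lam with hDdef
  have hMV : M * Vᵀ = Vᵀ * D := by
    ext i j
    have h1 : (M * Vᵀ) i j = (M *ᵥ v j) i := by
      simp [Matrix.mul_apply, Matrix.mulVec, dotProduct, hVdef]
    rw [h1, heig j]
    simp [Matrix.mul_apply, hDdef, Matrix.diagonal, hVdef, mul_comm]
  have hMdiag : M = Vᵀ * D * V := by
    calc M = M * (Vᵀ * V) := by rw [hVtV, Matrix.mul_one]
    _ = (M * Vᵀ) * V := by rw [Matrix.mul_assoc]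
    _ = Vᵀ * D * V := by rw [hMV]
  have hquad : ∀ y z : Fin N → ℝ,
      y ⬝ᵥ (M *ᵥ z) = ∑ i, lam i * ((V *ᵥ y) i * (V *ᵥ z) i) := by
    intro y z
    conv_lhs => rw [hMdiag]
    rw [← Matrix.mulVec_mulVec, ← Matrix.mulVec_mulVec, Matrix.dotProduct_mulVec,
      ← Matrix.mulVec_transpose, Matrix.transpose_transpose]
    simp only [dotProduct, hDdef, Matrix.mulVec_diagonal]
    exact Finset.sum_congr rfl fun i _ => by ring
  -- coordinates
  set a : Fin N → ℝ := V *ᵥ x with hadef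
  set ρ : ℝ := x ⬝ᵥ (M *ᵥ x) with hρdef
  set s : ℝ := (a i0)^2 with hsdef
  have hxx : x ⬝ᵥ x = 1 := by
    have h := Real.sqrt_eq_one.mp hx1
    simpa [dotProduct, sq] using h
  have hsuma : ∑ i, (a i)^2 = 1 := by
    have h := hpar x x
    rw [hxx] at h
    simpa [dotProduct, sq] using h
  have hs0 : 0 ≤ s := sq_nonneg _
  have hs1 : s ≤ 1 := by
    have := Finset.single_le_sum (f := fun i => (a i)^2) (fun i _ => sq_nonneg _)
      (Finset.mem_univ i0)
    rw [hsuma] at this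
    exact this
  have hrho : ρ = ∑ i, lam i * ((a i) * (a i)) := hquad x x
  -- the gradient in coordinates
  have hxa : Vᵀ *ᵥ a = x := by
    rw [hadef, Matrix.mulVec_mulVec, hVtV, Matrix.one_mulVec]
  have hgrad0 : ∀ m : Fin N → ℝ, (vecMulVec x x - 1) *ᵥ m = (x ⬝ᵥ m) • x - m := by
    intro m
    rw [Matrix.sub_mulVec, Matrix.one_mulVec]
    ext i
    simp only [Pi.sub_apply, Pi.smul_apply, smul_eq_mul,
      Matrix.mulVec, Matrix.vecMulVec_apply, dotProduct]
    congr 1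
    rw [Finset.sum_mul]
    exact Finset.sum_congr rfl fun j _ => by ring
  have hMx : M *ᵥ x = Vᵀ *ᵥ (D *ᵥ a) := by
    conv_lhs => rw [hMdiag]
    rw [← Matrix.mulVec_mulVec, ← Matrix.mulVec_mulVec]
  have hgradeq : (vecMulVec x x - 1) *ᵥ (M *ᵥ x) = Vᵀ *ᵥ (ρ • a - D *ᵥ a) := by
    rw [hgrad0 (M *ᵥ x), Matrix.mulVec_sub, Matrix.mulVec_smul, hxa, ← hMx, hρdef]
  have hGbound : s * (lam i0 - ρ)^2 ≤ 0.04 * δ^2 := by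
    have h0 : (0:ℝ) ≤ ∑ i, (((vecMulVec x x - 1) *ᵥ (M *ᵥ x)) i)^2 :=
      Finset.sum_nonneg fun i _ => sq_nonneg _
    have hG : ∑ i, (((vecMulVec x x - 1) *ᵥ (M *ᵥ x)) i)^2 ≤ 0.04 * δ^2 := by
      have h2 := Real.sq_sqrt h0
      nlinarith [hgrad, Real.sqrt_nonneg (∑ i, (((vecMulVec x x - 1) *ᵥ (M *ᵥ x)) i)^2)]
    have hGeq : ∑ i, (((vecMulVec x x - 1) *ᵥ (M *ᵥ x)) i)^2
        = ∑ i, ((ρ - lam i) * a i)^2 := by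
      have h3 : ∑ i, (((vecMulVec x x - 1) *ᵥ (M *ᵥ x)) i)^2
          = ((vecMulVec x x - 1) *ᵥ (M *ᵥ x)) ⬝ᵥ ((vecMulVec x x - 1) *ᵥ (M *ᵥ x)) := by
        simp [dotProduct, sq]
      rw [h3, hgradeq, hpar']
      simp only [dotProduct, Pi.sub_apply, Pi.smul_apply, smul_eq_mul, hDdef,
        Matrix.mulVec_diagonal]
      exact Finset.sum_congr rfl fun i _ => by ring
    rw [hGeq] at hG
    have h4 : s * (lam i0 - ρ)^2 = ((ρ - lam i0) * a i0)^2 := by rw [hsdef]; ring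
    rw [h4]
    have h5 : ((ρ - lam i0) * a i0)^2 ≤ ∑ i, ((ρ - lam i) * a i)^2 :=
      Finset.single_le_sum (f := fun i => ((ρ - lam i) * a i)^2)
        (fun i _ => sq_nonneg _) (Finset.mem_univ i0)
    linarith
  have hgaplow : (1 - s) * δ ≤ lam i0 - ρ := by
    have key : ∀ i : Fin N, (if i = i0 then 0 else δ) * ((a i)*(a i))
        ≤ (lam i0 - lam i) * ((a i)*(a i)) := by
      intro i
      by_cases h : i = i0
      · simp [h]
      · have hi1le : i1 ≤ i := by
          rw [hi1def, Fin.le_def]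
          simp only []
          have : i.val ≠ 0 := fun hc => h (by rw [hi0def]; exact Fin.ext hc)
          omega
        have := hmono i1 i hi1le
        have ha2 : 0 ≤ (a i)*(a i) := mul_self_nonneg _
        rw [if_neg h]
        apply mul_le_mul_of_nonneg_right _ ha2
        rw [hδdef]; linarith
    have hsum := Finset.sum_le_sum (fun i (_ : i ∈ Finset.univ) => key i)
    have hL : ∑ i, (if i = i0 then 0 else δ) * ((a i)*(a i)) = (1 - s) * δ := by
      have : ∀ i : Fin N, (if i = i0 then 0 else δ) * ((a i)*(a i))
          = δ * (a i)^2 - (if i = i0 then δ * (a i)^2 else 0) := by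
        intro i; split <;> ring
      rw [Finset.sum_congr rfl fun i _ => this i, Finset.sum_sub_distrib,
        Finset.sum_ite_eq' Finset.univ i0 (fun i => δ * (a i)^2), ← Finset.mul_sum, hsuma]
      simp [hsdef]
      ring
    have hR : ∑ i, (lam i0 - lam i) * ((a i)*(a i)) = lam i0 - ρ := by
      rw [hrho]
      have h5 : ∑ i, (lam i0 - lam i) * ((a i)*(a i))
          = lam i0 * ∑ i, (a i)^2 - ∑ i, lam i * ((a i)*(a i)) := by
        rw [Finset.mul_sum, ← Finset.sum_sub_distrib]
        exact Finset.sum_congr rfl fun i _ => by ring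
      rw [h5, hsuma, mul_one]
    rw [hL, hR] at hsum
    exact hsum
  -- symmetry helper: y ⬝ᵥ (M *ᵥ z) = (M *ᵥ y) ⬝ᵥ z
  have hMsymm : ∀ y z : Fin N → ℝ, y ⬝ᵥ (M *ᵥ z) = (M *ᵥ y) ⬝ᵥ z := by
    intro y z
    rw [Matrix.dotProduct_mulVec, ← Matrix.mulVec_transpose, hM.eq]
  by_cases hcase : s ≤ 0.35
  · -- negative curvature direction exists
    right
    have h1s : (0:ℝ) < 1 - s := by linarith
    set α : ℝ := a i0 with hαdef
    have hva : v i0 ⬝ᵥ x = α := by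
      rw [hαdef, hadef]
      simp [Matrix.mulVec, hVdef]
    have hxv : x ⬝ᵥ v i0 = α := by rw [dotProduct_comm]; exact hva
    have hvv : v i0 ⬝ᵥ v i0 = 1 := by simpa using horth i0 i0
    set w : Fin N → ℝ := v i0 - α • x with hwdef
    set c : ℝ := (Real.sqrt (1 - s))⁻¹ with hcdef
    have hsqrtpos : 0 < Real.sqrt (1 - s) := Real.sqrt_pos.mpr h1s
    have hc2 : c^2 = (1 - s)⁻¹ := by
      rw [hcdef, inv_pow, Real.sq_sqrt h1s.le]
    refine ⟨c • w, ?_, ?_, ?_⟩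
    · -- unit norm
      have hww : w ⬝ᵥ w = 1 - s := by
        simp only [hwdef, dotProduct_sub, sub_dotProduct, dotProduct_smul, smul_dotProduct,
          smul_eq_mul, hvv, hva, hxv, hxx, hsdef, hαdef]
        ring
      have hsum : ∑ i, (c • w) i ^ 2 = 1 := by
        have : ∑ i, (c • w) i ^ 2 = c^2 * (w ⬝ᵥ w) := by
          simp only [dotProduct, Finset.mul_sum, Pi.smul_apply, smul_eq_mul]
          exact Finset.sum_congr rfl fun i _ => by ring
        rw [this, hww, hc2]
        field_simp
      rw [hsum, Real.sqrt_one]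
    · -- orthogonality
      simp only [dotProduct_smul, smul_eq_mul, hwdef, dotProduct_sub, dotProduct_smul,
        smul_eq_mul, hxv, hxx]
      ring
    · -- curvature value
      have hMw : M *ᵥ w = lam i0 • v i0 - α • (M *ᵥ x) := by
        rw [hwdef, Matrix.mulVec_sub, Matrix.mulVec_smul, heig i0]
      have hvMx : v i0 ⬝ᵥ (M *ᵥ x) = lam i0 * α := by
        rw [hMsymm, heig i0]
        simp only [smul_dotProduct, smul_eq_mul, hva]
      have hwMw : w ⬝ᵥ (M *ᵥ w) = lam i0 * (1 - 2*s) + s * ρ := by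
        rw [hMw, hwdef]
        simp only [dotProduct_sub, sub_dotProduct, dotProduct_smul, smul_dotProduct,
          smul_eq_mul, hvv, hva, hxv, hvMx]
        simp only [hsdef, hαdef, ← hρdef]
        ring
      have huMu : (c • w) ⬝ᵥ (M *ᵥ (c • w)) = c^2 * (w ⬝ᵥ (M *ᵥ w)) := by
        rw [Matrix.mulVec_smul]
        simp only [dotProduct_smul, smul_dotProduct, smul_eq_mul]
        ring
      rw [huMu, hwMw, hc2]
      exact stmt3_caseB ρ s δ (lam i0) hδpos hs0 hcase hgaplow
  · -- positive curvature case
    left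
    intro u hu
    push_neg at hcase
    set cv : Fin N → ℝ := V *ᵥ u with hcvdef
    set n : ℝ := ∑ i, u i ^ 2 with hndef
    have hn0 : 0 ≤ n := Finset.sum_nonneg fun i _ => sq_nonneg _
    have hnc : ∑ i, (cv i)^2 = n := by
      have h := hpar u u
      rw [hndef]
      simpa [dotProduct, sq] using h
    have huMu : u ⬝ᵥ (M *ᵥ u) = ∑ i, lam i * ((cv i) * (cv i)) := hquad u u
    have horth0 : ∑ i, a i * cv i = 0 := by
      have h := hpar x u
      rw [hu] at h
      simpa [dotProduct] using h
    -- Cauchy–Schwarz on the complement of i0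
    have hCS := Finset.sum_mul_sq_le_sq_mul_sq (Finset.univ.erase i0) a cv
    have he1 : ∑ i ∈ Finset.univ.erase i0, a i * cv i = -(a i0 * cv i0) := by
      have h := Finset.sum_erase_add Finset.univ (fun i => a i * cv i) (Finset.mem_univ i0)
      linarith [horth0, h]
    have he2 : ∑ i ∈ Finset.univ.erase i0, (a i)^2 = 1 - s := by
      have h := Finset.sum_erase_add Finset.univ (fun i => (a i)^2) (Finset.mem_univ i0)
      rw [hsuma] at h
      rw [hsdef]
      linarith [h]
    have he3 : ∑ i ∈ Finset.univ.erase i0, (cv i)^2 = n - (cv i0)^2 := by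
      have h := Finset.sum_erase_add Finset.univ (fun i => (cv i)^2) (Finset.mem_univ i0)
      rw [hnc] at h
      have h' : ∑ i ∈ Finset.univ.erase i0, (cv i)^2 + (cv i0)^2 = n := h
      linarith [h']
    rw [he1, he2, he3] at hCS
    have hc0 : (cv i0)^2 ≤ (1 - s) * n := stmt3_cs (a i0) (cv i0) s n hCS hsdef
    -- eigenvalue bound on the quadratic form
    have hge : ∀ i : Fin N, i ≠ i0 → lam i ≤ lam i1 := by
      intro i h
      apply hmono i1 i
      rw [hi1def, Fin.le_def]
      simp only []
      have : i.val ≠ 0 := fun hc => h (by rw [hi0def]; exact Fin.ext hc)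
      omega
    have hbound : u ⬝ᵥ (M *ᵥ u) ≤ lam i1 * n + δ * (cv i0)^2 := by
      rw [huMu]
      have key : ∀ i : Fin N, lam i * ((cv i) * (cv i))
          ≤ (if i = i0 then lam i0 else lam i1) * (cv i)^2 := by
        intro i
        by_cases h : i = i0
        · rw [if_pos h, h]
          exact le_of_eq (by ring)
        · rw [if_neg h]
          have h2 : lam i * ((cv i) * (cv i)) = lam i * (cv i)^2 := by ring
          rw [h2]
          exact mul_le_mul_of_nonneg_right (hge i h) (sq_nonneg _)
      have hsum := Finset.sum_le_sum (fun i (_ : i ∈ Finset.univ) => key i)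
      have hR : ∑ i, (if i = i0 then lam i0 else lam i1) * (cv i)^2
          = lam i1 * n + δ * (cv i0)^2 := by
        have hterm : ∀ i : Fin N, (if i = i0 then lam i0 else lam i1) * (cv i)^2
            = lam i1 * (cv i)^2 + (if i = i0 then (lam i0 - lam i1) * (cv i)^2 else 0) := by
          intro i; split <;> ring
        rw [Finset.sum_congr rfl fun i _ => hterm i, Finset.sum_add_distrib,
          Finset.sum_ite_eq' Finset.univ i0 (fun i => (lam i0 - lam i1) * (cv i)^2),
          ← Finset.mul_sum, hnc]
        simp only [Finset.mem_univ, if_true, hδdef]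
      rw [hR] at hsum
      exact hsum
    -- lower bound on ρ via the scalar lemma
    have hrhole : lam i0 - ρ ≤ (s - 0.3) * δ := by
      have ht0 : 0 ≤ lam i0 - ρ := by
        have h7 := mul_nonneg (sub_nonneg.mpr hs1) hδpos.le
        linarith
      have h1 : s * ((lam i0 - ρ)/δ)^2 ≤ 0.04 := by
        rw [div_pow, ← mul_div_assoc, div_le_iff₀ (pow_pos hδpos 2)]
        exact hGbound
      have h2 : 1 - s ≤ (lam i0 - ρ)/δ := (le_div_iff₀ hδpos).mpr hgaplow
      have h3 := stmt3_scalar s ((lam i0 - ρ)/δ) h1 h2 hcase.le (div_nonneg ht0 hδpos.le)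
      calc lam i0 - ρ = ((lam i0 - ρ)/δ) * δ := by field_simp
      _ ≤ (s - 0.3) * δ := mul_le_mul_of_nonneg_right h3 hδpos.le
    exact stmt3_caseA ρ n (u ⬝ᵥ (M *ᵥ u)) ((cv i0)^2) (lam i0) (lam i1) δ s hδdef hδpos
      hn0 hbound hc0 hrhole
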